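/- Let p be a prime and let K be a reduced commutative ring of characteristic p. Write f ∈ K[x] uniquely as f = Σ_{i=0}^{p-1} λ_i x^i with λ_i ∈ K[x^p] (using the decomposition K[x] = ⊕_{i=0}^{p-1} K[x^p] x^i). Then in the first Weyl algebra A_1(K) one has (∂ + f)^p = ∂^p − λ_{p-1} + f^p. -/

import Mathlib

/-!
STATEMENT 1: Let `p` be a prime, `K` a reduced commutative ring of characteristic `p`.
Write `f ∈ K[x]` as `f = Σ_{i=0}^{p-1} λ_i x^i` with `λ_i ∈ K[x^p]`.  Then in the first
Weyl algebra `A₁(K)` one has `(∂ + f)^p = ∂^p − λ_{p-1} + f^p`.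
-/

noncomputable section

open Polynomial

/-- The defining relation of the first Weyl algebra: `∂·x = x·∂ + 1`. -/
inductive WeylRel (K : Type*) [CommRing K] :
    FreeAlgebra K (Fin 2) → FreeAlgebra K (Fin 2) → Prop
  | rel : WeylRel K (FreeAlgebra.ι K 1 * FreeAlgebra.ι K 0)
      (FreeAlgebra.ι K 0 * FreeAlgebra.ι K 1 + 1)

/-- The first Weyl algebra `A₁(K) = K⟨x, ∂ | ∂x − x∂ = 1⟩`. -/
abbrev Weyl (K : Type*) [CommRing K] := RingQuot (WeylRel K)

/-- The generator `x` of the first Weyl algebra. -/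
def wX (K : Type*) [CommRing K] : Weyl K :=
  RingQuot.mkAlgHom K (WeylRel K) (FreeAlgebra.ι K 0)

/-- The generator `∂` of the first Weyl algebra. -/
def wD (K : Type*) [CommRing K] : Weyl K :=
  RingQuot.mkAlgHom K (WeylRel K) (FreeAlgebra.ι K 1)

section Aux

open Finset

variable {K : Type*} [CommRing K]

def cc (f : Polynomial K) : ℕ → ℕ → Polynomial K
  | 0, 0 => 1
  | 0, _+1 => 0
  | n+1, 0 => derivative (cc f n 0)
  | n+1, i+1 => derivative (cc f n (i+1)) + f * cc f n i

/-- The operator `T g = g' + f·g` on `K[x]`. -/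
def tOp (f g : Polynomial K) : Polynomial K := derivative g + f * g

lemma cc_zero_of_lt (f : Polynomial K) : ∀ n i, n < i → cc f n i = 0 := by
  intro n
  induction n with
  | zero => intro i hi; match i, hi with
            | i+1, _ => rfl
  | succ n ih =>
      intro i hi
      match i, hi with
      | i+1, hi =>
        show derivative (cc f n (i+1)) + f * cc f n i = 0
        rw [ih (i+1) (by omega), ih i (by omega), derivative_zero, mul_zero, add_zero]

lemma cc_base (f : Polynomial K) : ∀ n, cc f n 0 = if n = 0 then 1 else 0 := by
  intro n
  induction n with
  | zero => rfl
  | succ n ih =>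
      show derivative (cc f n 0) = _
      rw [ih]
      simp only [Nat.succ_ne_zero, if_false]
      split_ifs <;> simp

lemma cc_diag (f : Polynomial K) : ∀ n, cc f n n = f ^ n := by
  intro n
  induction n with
  | zero => rfl
  | succ n ih =>
      show derivative (cc f n (n+1)) + f * cc f n n = f ^ (n+1)
      rw [cc_zero_of_lt f n (n+1) (by omega), ih, derivative_zero, zero_add, pow_succ,
        mul_comm]

lemma cc_sum (f : Polynomial K) : ∀ n, ∑ i ∈ range (n+1), cc f n i = (tOp f)^[n] 1 := by
  intro n
  induction n with
  | zero => simp [cc]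
  | succ n ih =>
      rw [Function.iterate_succ_apply', ← ih]
      rw [Finset.sum_range_succ' (fun i => cc f (n+1) i) (n+1)]
      show (∑ i ∈ range (n+1), (derivative (cc f n (i+1)) + f * cc f n i))
          + derivative (cc f n 0) = _
      rw [Finset.sum_add_distrib]
      have h1 : (∑ i ∈ range (n+1), derivative (cc f n (i+1))) + derivative (cc f n 0)
          = ∑ i ∈ range (n+2), derivative (cc f n i) := by
        rw [Finset.sum_range_succ' (fun i => derivative (cc f n i)) (n+1)]
      have h2 : ∑ i ∈ range (n+2), derivative (cc f n i)
          = derivative (∑ i ∈ range (n+1), cc f n i) := by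
        rw [Finset.sum_range_succ, cc_zero_of_lt f n (n+1) (by omega), derivative_zero,
          add_zero, map_sum]
      rw [add_right_comm, h1, h2]
      unfold tOp
      rw [Finset.mul_sum]

/-- `prec f m i = cc f m (i-1)`, with value `0` at `i = 0`. -/
def prec (f : Polynomial K) (m : ℕ) : ℕ → Polynomial K
  | 0 => 0
  | i+1 => cc f m i

lemma cc_succ (f : Polynomial K) (n i : ℕ) :
    cc f (n+1) i = derivative (cc f n i) + f * prec f n i := by
  cases i with
  | zero => show derivative (cc f n 0) = _; rw [show prec f n 0 = 0 from rfl, mul_zero, add_zero]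
  | succ m => rfl

lemma cc_key (f : Polynomial K) : ∀ n i, i • cc f n i
    = ∑ j ∈ range n, n.choose (j+1) • ((⇑derivative)^[j] f * prec f (n-1-j) i) := by
  intro n
  induction n with
  | zero =>
      intro i
      rw [Finset.range_zero, Finset.sum_empty]
      cases i with
      | zero => rw [zero_smul]
      | succ m => rw [cc_zero_of_lt f 0 (m+1) (by omega), smul_zero]
  | succ n ih =>
      intro i
      cases i with
      | zero => simp [prec]
      | succ m =>
        -- left side
        have e1 : cc f (n+1) (m+1) = derivative (cc f n (m+1)) + f * cc f n m := rfl
        have hd : derivative (∑ x ∈ range n,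
              n.choose (x+1) • ((⇑derivative)^[x] f * cc f (n-1-x) m))
            = (∑ x ∈ range n, n.choose (x+1) • ((⇑derivative)^[x+1] f * cc f (n-1-x) m))
              + ∑ x ∈ range n, n.choose (x+1) •
                  ((⇑derivative)^[x] f * derivative (cc f (n-1-x) m)) := by
          rw [map_sum, ← Finset.sum_add_distrib]
          refine Finset.sum_congr rfl fun x hx => ?_
          rw [map_nsmul, derivative_mul, smul_add, Function.iterate_succ_apply']
        have hf2 : f * (∑ j ∈ range n,
              n.choose (j+1) • ((⇑derivative)^[j] f * prec f (n-1-j) m))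
            = ∑ j ∈ range n, n.choose (j+1) •
                ((⇑derivative)^[j] f * (f * prec f (n-1-j) m)) := by
          rw [Finset.mul_sum]
          refine Finset.sum_congr rfl fun x hx => ?_
          rw [mul_smul_comm, mul_left_comm]
        have hcomb : (∑ x ∈ range n,
              n.choose (x+1) • ((⇑derivative)^[x] f * derivative (cc f (n-1-x) m)))
            + ∑ j ∈ range n, n.choose (j+1) • ((⇑derivative)^[j] f * (f * prec f (n-1-j) m))
            = ∑ j ∈ range n, n.choose (j+1) • ((⇑derivative)^[j] f * cc f (n-j) m) := by
          rw [← Finset.sum_add_distrib]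
          refine Finset.sum_congr rfl fun x hx => ?_
          rw [← smul_add, ← mul_add, ← cc_succ]
          have hx' : n - 1 - x + 1 = n - x := by
            have := Finset.mem_range.mp hx; omega
          rw [hx']
        have lhs_eq : (m+1) • cc f (n+1) (m+1)
            = f * cc f n m
              + (∑ j ∈ range n, n.choose (j+1) • ((⇑derivative)^[j+1] f * cc f (n-1-j) m))
              + ∑ j ∈ range n, n.choose (j+1) • ((⇑derivative)^[j] f * cc f (n-j) m) := by
          rw [e1, smul_add, ← map_nsmul derivative, ih (m+1)]
          have hprec : ∀ j, prec f (n-1-j) (m+1) = cc f (n-1-j) m := fun j => rfl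
          simp only [hprec]
          rw [succ_nsmul (f * cc f n m), ← mul_smul_comm, ih m, hd, hf2, ← hcomb]
          abel
        have rhs_eq : (∑ j ∈ range (n+1),
              (n+1).choose (j+1) • ((⇑derivative)^[j] f * prec f (n-j) (m+1)))
            = f * cc f n m
              + (∑ j ∈ range n, n.choose (j+1) • ((⇑derivative)^[j+1] f * cc f (n-1-j) m))
              + ∑ j ∈ range n, n.choose (j+1) • ((⇑derivative)^[j] f * cc f (n-j) m) := by
          have hprec : ∀ j, prec f (n-j) (m+1) = cc f (n-j) m := fun j => rfl
          simp only [hprec, Nat.choose_succ_succ, add_smul]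
          rw [Finset.sum_add_distrib]
          congr 1
          · rw [Finset.sum_range_succ' (fun j => n.choose j • ((⇑derivative)^[j] f * cc f (n-j) m)) n]
            simp only [Nat.choose_zero_right, one_smul, Function.iterate_zero_apply,
              Nat.sub_zero]
            rw [add_comm]
            congr 1
            refine Finset.sum_congr rfl fun x hx => ?_
            have hx' : n - (x+1) = n - 1 - x := by omega
            rw [hx']
          · rw [Finset.sum_range_succ]
            simp [Nat.choose_succ_self]
        simp only [Nat.add_sub_cancel]
        rw [lhs_eq, rhs_eq]

section CharP

variable {p : ℕ} [CharP K p]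

lemma nsmul_cancel_poly (hp : p.Prime) {k : ℕ} (hk : ¬ p ∣ k) {c : Polynomial K} (h : k • c = 0) : c = 0 := by
  haveI : Fact p.Prime := ⟨hp⟩
  have hu : IsUnit ((k : ZMod p)) := by
    rw [ZMod.isUnit_iff_coprime]
    exact ((Nat.Prime.coprime_iff_not_dvd hp).2 hk).symm
  have hu2 : IsUnit ((k : Polynomial K)) := by
    have := hu.map (ZMod.castHom dvd_rfl (Polynomial K))
    rwa [map_natCast] at this
  rw [nsmul_eq_mul] at h
  obtain ⟨u, hu'⟩ := hu2
  calc c = (↑u⁻¹ * (k : Polynomial K)) * c := by rw [← hu', Units.inv_mul, one_mul]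
  _ = ↑u⁻¹ * ((k : Polynomial K) * c) := by rw [mul_assoc]
  _ = 0 := by rw [h, mul_zero]

lemma choose_smul_zero (hp : p.Prime) {j : ℕ} (hj1 : j ≠ 0) (hj2 : j < p) (z : Polynomial K) :
    p.choose j • z = 0 := by
  rw [nsmul_eq_mul]
  have h0 : ((p.choose j : ℕ) : Polynomial K) = 0 := by
    rw [(CharP.cast_eq_zero_iff (Polynomial K) p _)]
    exact hp.dvd_choose_self hj1 hj2
  rw [h0, zero_mul]

omit [CharP K p] in
lemma cc_p_one (hp : p.Prime) (f : Polynomial K) : cc f p 1 = (⇑derivative)^[p-1] f := by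
  have h2le := hp.two_le
  have h := cc_key f p 1
  rw [one_smul] at h
  rw [h]
  have hterm : ∀ j ∈ range p, p.choose (j+1) • ((⇑derivative)^[j] f * prec f (p-1-j) 1)
      = if j = p - 1 then (⇑derivative)^[p-1] f else 0 := by
    intro j hj
    have hj' := Finset.mem_range.mp hj
    by_cases hcase : j = p - 1
    · subst hcase
      have h1 : p - 1 - (p - 1) = 0 := by omega
      have h2 : p - 1 + 1 = p := by have := hp.two_le; omega
      rw [if_pos rfl, h1, h2, Nat.choose_self, one_smul]
      show _ * cc f 0 0 = _
      rw [show (cc f 0 0 : Polynomial K) = 1 from rfl, mul_one]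
    · rw [if_neg hcase]
      have h1 : prec f (p-1-j) 1 = cc f (p-1-j) 0 := rfl
      rw [h1, cc_base, if_neg (by omega), mul_zero, smul_zero]
  rw [Finset.sum_congr rfl hterm, Finset.sum_ite_eq' (range p) (p-1)
    (fun _ => (⇑derivative)^[p-1] f), if_pos (Finset.mem_range.mpr (by have := hp.two_le; omega))]

lemma cc_p_mid (hp : p.Prime) (f : Polynomial K) {k : ℕ} (hk2 : 2 ≤ k) (hkp : k < p) : cc f p k = 0 := by
  have h2le := hp.two_le
  have h := cc_key f p k
  have hz : ∑ j ∈ range p, p.choose (j+1) • ((⇑derivative)^[j] f * prec f (p-1-j) k) = 0 := by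
    refine Finset.sum_eq_zero fun j hj => ?_
    have hj' := Finset.mem_range.mp hj
    by_cases hcase : j = p - 1
    · subst hcase
      have h1 : p - 1 - (p - 1) = 0 := by omega
      rw [h1]
      have h2 : prec f 0 k = 0 := by
        match k, hk2 with
        | k+1, _ =>
          show cc f 0 k = 0
          rw [cc_zero_of_lt f 0 k (by omega)]
      rw [h2, mul_zero, smul_zero]
    · exact choose_smul_zero hp (by omega) (by omega) _
  rw [hz] at h
  exact nsmul_cancel_poly hp
    (fun hdvd => absurd (Nat.le_of_dvd (by omega) hdvd) (by omega)) h

lemma tOp_iterate_p (hp : p.Prime) (f : Polynomial K) :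
    (tOp f)^[p] 1 = (⇑derivative)^[p-1] f + f ^ p := by
  have hp2 := hp.two_le
  rw [← cc_sum]
  have hterm : ∀ i ∈ range (p+1), cc f p i
      = (if i = 1 then (⇑derivative)^[p-1] f else 0) + (if i = p then f ^ p else 0) := by
    intro i hi
    have hi' := Finset.mem_range.mp hi
    by_cases h1 : i = 1
    · subst h1
      rw [if_pos rfl, if_neg (by omega), add_zero, cc_p_one hp]
    · by_cases h2 : i = p
      · subst h2
        rw [if_neg h1, if_pos rfl, zero_add, cc_diag]
      · rw [if_neg h1, if_neg h2, add_zero]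
        by_cases h3 : i = 0
        · subst h3; rw [cc_base, if_neg (by omega)]
        · exact cc_p_mid hp f (k := i) (by omega) (by omega)
  rw [Finset.sum_congr rfl hterm, Finset.sum_add_distrib,
    Finset.sum_ite_eq' (range (p+1)) 1 (fun _ => (⇑derivative)^[p-1] f),
    Finset.sum_ite_eq' (range (p+1)) p (fun _ => f ^ p),
    if_pos (Finset.mem_range.mpr (by omega)), if_pos (Finset.mem_range.mpr (by omega))]

end CharP

-- ===== Part 3 : derivative^[p-1] f = - expand =====
section Part3

variable {p : ℕ} [CharP K p]

lemma derivative_expand_eq_zero (hp : 1 ≤ p) (g : Polynomial K) :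
    derivative (expand K p g) = 0 := by
  rw [derivative_expand, CharP.cast_eq_zero, zero_mul, mul_zero]

lemma iterate_derivative_expand_mul (hp : 1 ≤ p) (g h : Polynomial K) (m : ℕ) :
    (⇑derivative)^[m] (expand K p g * h) = expand K p g * (⇑derivative)^[m] h := by
  induction m with
  | zero => rfl
  | succ m ih =>
      rw [Function.iterate_succ_apply', ih, derivative_mul,
        derivative_expand_eq_zero hp, zero_mul, zero_add,
        Function.iterate_succ_apply' derivative m h]

lemma iterate_derivative_finset_sum (m : ℕ) (s : Finset ℕ) (F : ℕ → Polynomial K) :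
    (⇑derivative)^[m] (∑ i ∈ s, F i) = ∑ i ∈ s, (⇑derivative)^[m] (F i) := by
  induction m with
  | zero => rfl
  | succ m ih =>
      rw [Function.iterate_succ_apply', ih, map_sum]
      exact Finset.sum_congr rfl fun i _ => (Function.iterate_succ_apply' derivative m (F i)).symm

lemma factorial_cast_eq_neg_one (hp : p.Prime) : (((p-1).factorial : ℕ) : K) = -1 := by
  haveI : Fact p.Prime := ⟨hp⟩
  have h1 : (((p-1).factorial : ℕ) : K) = (ZMod.castHom dvd_rfl K) (((p-1).factorial : ℕ) : ZMod p) := by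
    rw [map_natCast]
  rw [h1, ZMod.wilsons_lemma, map_neg, map_one]

lemma deriv_pm1 (hp : p.Prime) (l : ℕ → Polynomial K) (f : Polynomial K)
    (hf : f = ∑ i ∈ Finset.range p, Polynomial.expand K p (l i) * Polynomial.X ^ i) :
    (⇑derivative)^[p-1] f = - expand K p (l (p-1)) := by
  have hp2 := hp.two_le
  rw [hf, iterate_derivative_finset_sum]
  have hterm : ∀ i ∈ range p, (⇑derivative)^[p-1] (expand K p (l i) * X ^ i)
      = if i = p - 1 then - expand K p (l (p-1)) else 0 := by
    intro i hi
    have hi' := Finset.mem_range.mp hi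
    rw [iterate_derivative_expand_mul (by omega), iterate_derivative_X_pow_eq_smul]
    by_cases hcase : i = p - 1
    · subst hcase
      rw [if_pos rfl, Nat.descFactorial_self, Nat.sub_self, pow_zero,
        factorial_cast_eq_neg_one hp, neg_smul, one_smul, mul_neg, mul_one]
    · rw [if_neg hcase, Nat.descFactorial_eq_zero_iff_lt.mpr (by omega), Nat.cast_zero, zero_smul, mul_zero]
  rw [Finset.sum_congr rfl hterm,
    Finset.sum_ite_eq' (range p) (p-1) (fun _ => - expand K p (l (p-1))),
    if_pos (Finset.mem_range.mpr (by omega))]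

end Part3

-- ===== Part 1 : Weyl algebra computation =====
section Weyl

lemma weyl_rel (K : Type*) [CommRing K] : wD K * wX K = wX K * wD K + 1 := by
  have h := RingQuot.mkAlgHom_rel K (WeylRel.rel (K := K))
  simpa only [wX, wD, map_mul, map_add, map_one] using h

lemma wD_wX_pow (K : Type*) [CommRing K] :
    ∀ n : ℕ, wD K * wX K ^ (n+1) = wX K ^ (n+1) * wD K + (n+1) • wX K ^ n := by
  intro n
  induction n with
  | zero => simpa using weyl_rel K
  | succ n ih =>
      calc wD K * wX K ^ (n+2) = (wD K * wX K ^ (n+1)) * wX K := by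
            rw [pow_succ, mul_assoc]
      _ = (wX K ^ (n+1) * wD K + (n+1) • wX K ^ n) * wX K := by rw [ih]
      _ = wX K ^ (n+1) * (wD K * wX K) + (n+1) • (wX K ^ n * wX K) := by
            rw [add_mul, mul_assoc, smul_mul_assoc]
      _ = wX K ^ (n+1) * (wX K * wD K + 1) + (n+1) • wX K ^ (n+1) := by
            rw [weyl_rel K, ← pow_succ]
      _ = wX K ^ (n+2) * wD K + (n+2) • wX K ^ (n+1) := by
            rw [mul_add, mul_one, ← mul_assoc, ← pow_succ, succ_nsmul (wX K ^ (n+1)) (n+1)]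
            abel

lemma wD_aeval (K : Type*) [CommRing K] (g : Polynomial K) :
    wD K * aeval (wX K) g = aeval (wX K) g * wD K + aeval (wX K) (derivative g) := by
  induction g using Polynomial.induction_on' with
  | add u v hu hv =>
      rw [map_add, map_add, mul_add, hu, hv, add_mul, map_add]
      abel
  | monomial n a =>
      rw [aeval_monomial, derivative_monomial, aeval_monomial]
      cases n with
      | zero =>
          simp [mul_zero, ← Algebra.commutes]
      | succ n =>
          rw [← mul_assoc, ← Algebra.commutes, mul_assoc, wD_wX_pow, mul_add,
            Nat.add_sub_cancel]
          congr 1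
          · rw [← mul_assoc]
          · rw [map_mul, map_natCast (algebraMap K (Weyl K)) (n+1), nsmul_eq_mul,
              ← mul_assoc]

lemma weyl_pow (K : Type*) [CommRing K] (f : Polynomial K) :
    ∀ n : ℕ, (wD K + aeval (wX K) f) ^ n
      = ∑ k ∈ range (n+1), n.choose k •
          (aeval (wX K) ((tOp f)^[n-k] 1) * wD K ^ k) := by
  have hpt : ∀ m k : ℕ, (wD K + aeval (wX K) f) * (aeval (wX K) ((tOp f)^[m] 1) * wD K ^ k)
      = aeval (wX K) ((tOp f)^[m] 1) * wD K ^ (k+1)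
        + aeval (wX K) ((tOp f)^[m+1] 1) * wD K ^ k := by
    intro m k
    rw [add_mul, ← mul_assoc, wD_aeval, Function.iterate_succ_apply' (tOp f) m 1]
    show _ = _ + aeval (wX K) (derivative ((tOp f)^[m] 1) + f * (tOp f)^[m] 1) * _
    rw [map_add, add_mul, add_mul, mul_assoc, ← pow_succ', add_assoc, map_mul]
    congr 2
    rw [← mul_assoc]
  intro n
  induction n with
  | zero => simp
  | succ n ih =>
      rw [pow_succ', ih, Finset.mul_sum]
      have h1 : ∀ k ∈ range (n+1),
          (wD K + aeval (wX K) f) * (n.choose k • (aeval (wX K) ((tOp f)^[n-k] 1) * wD K ^ k))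
          = n.choose k • (aeval (wX K) ((tOp f)^[n-k] 1) * wD K ^ (k+1))
            + n.choose k • (aeval (wX K) ((tOp f)^[n+1-k] 1) * wD K ^ k) := by
        intro k hk
        have hk' := Finset.mem_range.mp hk
        rw [mul_smul_comm, hpt (n-k) k, smul_add]
        have : n - k + 1 = n + 1 - k := by omega
        rw [this]
      rw [Finset.sum_congr rfl h1, Finset.sum_add_distrib]
      -- massage RHS
      have hrhs : (∑ k ∈ range (n+2), (n+1).choose k •
            (aeval (wX K) ((tOp f)^[n+1-k] 1) * wD K ^ k))
          = ((∑ k ∈ range (n+1), n.choose k • (aeval (wX K) ((tOp f)^[n-k] 1) * wD K ^ (k+1)))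
              + ∑ k ∈ range (n+1), n.choose (k+1) •
                  (aeval (wX K) ((tOp f)^[n-k] 1) * wD K ^ (k+1)))
            + aeval (wX K) ((tOp f)^[n+1] 1) := by
        rw [Finset.sum_range_succ' (fun k => (n+1).choose k •
          (aeval (wX K) ((tOp f)^[n+1-k] 1) * wD K ^ k)) (n+1)]
        simp only [Nat.choose_succ_succ, add_smul, Nat.succ_sub_succ, Nat.choose_zero_right,
          one_smul, pow_zero, mul_one, Nat.sub_zero]
        rw [Finset.sum_add_distrib]
      have hlhs2 : (∑ k ∈ range (n+1), n.choose k •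
            (aeval (wX K) ((tOp f)^[n+1-k] 1) * wD K ^ k))
          = (∑ k ∈ range (n+1), n.choose (k+1) •
              (aeval (wX K) ((tOp f)^[n-k] 1) * wD K ^ (k+1)))
            + aeval (wX K) ((tOp f)^[n+1] 1) := by
        rw [Finset.sum_range_succ' (fun k => n.choose k •
          (aeval (wX K) ((tOp f)^[n+1-k] 1) * wD K ^ k)) n]
        simp only [Nat.succ_sub_succ, Nat.choose_zero_right, one_smul, pow_zero, mul_one,
          Nat.sub_zero]
        congr 1
        rw [Finset.sum_range_succ, Nat.choose_succ_self, zero_smul, add_zero]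
      rw [hrhs, hlhs2]
      abel

lemma weyl_pow_p (K : Type*) [CommRing K] {p : ℕ} (hp : p.Prime) [CharP K p]
    (f : Polynomial K) :
    (wD K + aeval (wX K) f) ^ p = wD K ^ p + aeval (wX K) ((tOp f)^[p] 1) := by
  have hp2 := hp.two_le
  rw [weyl_pow K f p]
  have hterm : ∀ k ∈ range (p+1), p.choose k • (aeval (wX K) ((tOp f)^[p-k] 1) * wD K ^ k)
      = (if k = 0 then aeval (wX K) ((tOp f)^[p] 1) else 0)
        + (if k = p then wD K ^ p else 0) := by
    intro k hk
    have hk' := Finset.mem_range.mp hk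
    by_cases h0 : k = 0
    · subst h0
      rw [if_pos rfl, if_neg (by omega), add_zero, Nat.choose_zero_right, one_smul,
        Nat.sub_zero, pow_zero, mul_one]
    · by_cases hP : k = p
      · subst hP
        rw [if_neg h0, if_pos rfl, zero_add, Nat.choose_self, one_smul, Nat.sub_self]
        show aeval (wX K) 1 * _ = _
        rw [map_one, one_mul]
      · rw [if_neg h0, if_neg hP, add_zero, nsmul_eq_mul]
        have hc : ((p.choose k : ℕ) : Weyl K) = 0 := by
          rw [← map_natCast (algebraMap K (Weyl K)) (p.choose k),
            (CharP.cast_eq_zero_iff K p _).2 (hp.dvd_choose_self h0 (by omega)), map_zero]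
        rw [hc, zero_mul]
  rw [Finset.sum_congr rfl hterm, Finset.sum_add_distrib,
    Finset.sum_ite_eq' (range (p+1)) 0 (fun _ => aeval (wX K) ((tOp f)^[p] 1)),
    Finset.sum_ite_eq' (range (p+1)) p (fun _ => wD K ^ p),
    if_pos (Finset.mem_range.mpr (by omega)), if_pos (Finset.mem_range.mpr (by omega)),
    add_comm]

end Weyl

end Aux

/-- The element `λ_i ∈ K[x^p]` is encoded as `Polynomial.expand K p (l i)`, i.e. as
`(l i)(x^p)`, and the decomposition `f = Σ_{i=0}^{p-1} λ_i x^i` is the hypothesis `hf`. -/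

theorem statement1 (p : ℕ) (hp : p.Prime) (K : Type*) [CommRing K] [IsReduced K] [CharP K p]
    (l : ℕ → Polynomial K) (f : Polynomial K)
    (hf : f = ∑ i ∈ Finset.range p, Polynomial.expand K p (l i) * Polynomial.X ^ i) :
    (wD K + aeval (wX K) f) ^ p =
      wD K ^ p - aeval (wX K) (Polynomial.expand K p (l (p - 1))) + aeval (wX K) f ^ p := by
  rw [weyl_pow_p K hp f, tOp_iterate_p hp f, map_add, map_pow, deriv_pm1 hp l f hf, map_neg]
  abel
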